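/- If O is a non-reversible topology on X, then every maximal chain in ([O]_∼, ⊆) is a Dedekind-complete linear order: for every cut (L₀, L₁) of the chain L with both parts nonempty, either L₀ has a largest element or L₁ has a smallest element. -/

import Mathlib

open Set Filter TopologicalSpace

variable {X : Type*}

/-- The family of open sets of a topology. -/
def opensOf (O : TopologicalSpace X) : Set (Set X) := {U | O.IsOpen U}

/-- The image family f[O] = { f[U] : U ∈ O } of a topology under a bijection. -/
def imgOpens (f : X ≃ X) (O : TopologicalSpace X) : Set (Set X) :=
  (Set.image f) '' opensOf O

/-- A topology is reversible iff every continuous self-bijection is a homeomorphism. -/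
def Reversible (O : TopologicalSpace X) : Prop :=
  ∀ f : X ≃ X, @Continuous X X O O f → @Continuous X X O O f.symm

/-- The homeomorphism class [O]_≅ of a topology within the topologies on X. -/
def homeoCls (O : TopologicalSpace X) : Set (TopologicalSpace X) :=
  {O' | ∃ f : X ≃ X, imgOpens f O = opensOf O'}

/-- O₁ ≼ O₂ : there is a condensation (continuous bijection) (X,O₂) → (X,O₁). -/
def Cond (O₁ O₂ : TopologicalSpace X) : Prop :=
  ∃ f : X ≃ X, @Continuous X X O₂ O₁ f

/-- The condensational equivalence class [O]_∼. -/
def simCls (O : TopologicalSpace X) : Set (TopologicalSpace X) :=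
  {O' | Cond O' O ∧ Cond O O'}

/-- if O is non-reversible, every maximal chain in ([O]_∼, ⊆)
is Dedekind complete: every nontrivial cut is realized. -/
theorem stmt_7 (O : TopologicalSpace X) (hO : ¬ Reversible O)
    (L : Set (TopologicalSpace X)) (hL : L ⊆ simCls O)
    (hchain : IsChain (fun O₁ O₂ => opensOf O₁ ⊆ opensOf O₂) L)
    (hmax : ∀ L' : Set (TopologicalSpace X), L ⊆ L' → L' ⊆ simCls O →
      IsChain (fun O₁ O₂ => opensOf O₁ ⊆ opensOf O₂) L' → L' = L)
    (L₀ L₁ : Set (TopologicalSpace X))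
    (hunion : L₀ ∪ L₁ = L) (hdisj : Disjoint L₀ L₁)
    (hne₀ : L₀.Nonempty) (hne₁ : L₁.Nonempty)
    (hcut : ∀ a ∈ L₀, ∀ b ∈ L₁, opensOf a ⊆ opensOf b) :
    (∃ m ∈ L₀, ∀ x ∈ L₀, opensOf x ⊆ opensOf m) ∨
    (∃ m ∈ L₁, ∀ x ∈ L₁, opensOf m ⊆ opensOf x) := by
  classical
  set T : TopologicalSpace X := sSup L₁ with hT
  -- opens of T are the common opens of L₁
  have hTopen : ∀ U : Set X, U ∈ opensOf T ↔ ∀ b ∈ L₁, U ∈ opensOf b := by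
    intro U
    exact
      (isOpen_sSup_iff (T := L₁) (s := U))
  obtain ⟨a, ha⟩ := hne₀
  obtain ⟨b, hb⟩ := hne₁
  have haT : opensOf a ⊆ opensOf T := by
    intro U hU
    exact (hTopen U).2 (fun c hc => hcut a ha c hc hU)
  have hTb : ∀ c ∈ L₁, opensOf T ⊆ opensOf c := by
    intro c hc U hU
    exact (hTopen U).1 hU c hc
  have haL : a ∈ L := hunion ▸ Or.inl ha
  have hbL : b ∈ L := hunion ▸ Or.inr hb
  -- T is in the condensational class of O
  have hTsim : T ∈ simCls O := by
    obtain ⟨hbO, _⟩ := hL hbL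
    obtain ⟨_, hOa⟩ := hL haL
    constructor
    · obtain ⟨f, hf⟩ := hbO
      refine ⟨f, ?_⟩
      rw [continuous_def] at hf ⊢
      intro U hU
      exact hf U (hTb b hb hU)
    · obtain ⟨g, hg⟩ := hOa
      refine ⟨g, ?_⟩
      rw [continuous_def] at hg ⊢
      intro U hU
      exact haT (hg U hU)
  -- the extended chain
  have hchain' : IsChain (fun O₁ O₂ => opensOf O₁ ⊆ opensOf O₂) (insert T L) := by
    intro x hx y hy hxy
    rcases hx with rfl | hx
    · rcases hy with rfl | hy
      · exact absurd rfl hxy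
      · rcases (hunion ▸ hy : y ∈ L₀ ∪ L₁) with hy0 | hy1
        · exact Or.inr fun U hU => (hTopen U).2 (fun c hc => hcut y hy0 c hc hU)
        · exact Or.inl (hTb y hy1)
    · rcases hy with rfl | hy
      · rcases (hunion ▸ hx : x ∈ L₀ ∪ L₁) with hx0 | hx1
        · exact Or.inl fun U hU => (hTopen U).2 (fun c hc => hcut x hx0 c hc hU)
        · exact Or.inr (hTb x hx1)
      · exact hchain hx hy hxy
  have hsub : insert T L ⊆ simCls O := by
    intro x hx
    rcases hx with rfl | hx
    · exact hTsim
    · exact hL hx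
  have hTL : T ∈ L := by
    have := hmax (insert T L) (subset_insert _ _) hsub hchain'
    exact this ▸ mem_insert _ _
  rcases (hunion ▸ hTL : T ∈ L₀ ∪ L₁) with hT0 | hT1
  · exact Or.inl ⟨T, hT0, fun x hx U hU => (hTopen U).2 (fun c hc => hcut x hx c hc hU)⟩
  · exact Or.inr ⟨T, hT1, fun x hx => hTb x hx⟩
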